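/- Let Γ be a group acting by homeomorphisms on a nonempty compact Hausdorff space X (with its Borel σ-algebra), and let Λ be a subgroup of Γ. Then the following are equivalent: (1) there exists a Λ-invariant regular Borel probability measure on X; (2) there exists a unital, positive, Γ-equivariant linear map ψ : C(X,ℝ) → ℓ∞(Γ/Λ), where ℓ∞(Γ/Λ) denotes the space of bounded real-valued functions on the left coset space Γ/Λ. (This is the content of Proposition 3.9: Λ is a 𝒞-subgroup, i.e. there is a Γ-map from C(X) into B(ℓ²(Γ/Λ)), if and only if Λ fixes a probability measure on X; one direction is witnessed by the Poisson map P_ν(f)(gΛ) = ∫ f(g·x) dν(x).) -/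

import Mathlib

open MeasureTheory
open scoped NNReal ENNReal

/-- The action of `g : G` on a continuous function `f ∈ C(X, ℝ)`, i.e. `(g • f)(x) = f(g⁻¹ • x)`. -/
noncomputable def smulCont {G X : Type*} [Group G] [TopologicalSpace X] [MulAction G X]
    [ContinuousConstSMul G X] (g : G) (f : C(X, ℝ)) : C(X, ℝ) :=
  f.comp ⟨fun x => g⁻¹ • x, continuous_const_smul _⟩

section Aux

open TopologicalSpace

variable {G X : Type*} [Group G] [TopologicalSpace X] [CompactSpace X] [T2Space X]
    [MulAction G X] [ContinuousConstSMul G X]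

/-- The set of test functions for a compact set `K`. -/
def testSet (K : Set X) : Set C(X, ℝ) :=
  {f : C(X, ℝ) | (∀ x, 0 ≤ f x) ∧ ∀ x ∈ K, 1 ≤ f x}

lemma one_mem_testSet (K : Set X) : (1 : C(X, ℝ)) ∈ testSet K :=
  ⟨fun _ => zero_le_one, fun _ _ => le_refl 1⟩

/-- The Riesz content associated to a linear functional `φ`. -/
noncomputable def rc (φ : C(X, ℝ) →ₗ[ℝ] ℝ) (K : Set X) : ℝ :=
  sInf (φ '' testSet K)

variable (φ : C(X, ℝ) →ₗ[ℝ] ℝ)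

lemma rc_image_nonempty (K : Set X) : (φ '' testSet K).Nonempty :=
  ⟨φ 1, 1, one_mem_testSet K, rfl⟩

variable (hpos : ∀ f : C(X, ℝ), (∀ x, 0 ≤ f x) → 0 ≤ φ f)

section PosLemmas
include hpos

lemma φ_mono {f g : C(X, ℝ)} (h : ∀ x, f x ≤ g x) : φ f ≤ φ g := by
  have h0 : 0 ≤ φ (g - f) := hpos _ (fun x => by simp [sub_nonneg, h x])
  have := φ.map_sub g f
  rw [this] at h0
  linarith

lemma rc_bddBelow (K : Set X) : BddBelow (φ '' testSet K) := by
  refine ⟨0, ?_⟩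
  rintro r ⟨f, hf, rfl⟩
  exact hpos f hf.1

lemma rc_le {K : Set X} {f : C(X, ℝ)} (hf : f ∈ testSet K) : rc φ K ≤ φ f :=
  csInf_le (rc_bddBelow φ hpos K) ⟨f, hf, rfl⟩

lemma rc_nonneg (K : Set X) : 0 ≤ rc φ K :=
  le_csInf (rc_image_nonempty φ K) (by rintro r ⟨f, hf, rfl⟩; exact hpos f hf.1)

lemma rc_mono {K₁ K₂ : Set X} (h : K₁ ⊆ K₂) : rc φ K₁ ≤ rc φ K₂ :=
  csInf_le_csInf (rc_bddBelow φ hpos K₁) (rc_image_nonempty φ K₂)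
    (Set.image_mono fun f hf => ⟨hf.1, fun x hx => hf.2 x (h hx)⟩)

lemma rc_exists_lt (K : Set X) {ε : ℝ} (hε : 0 < ε) :
    ∃ f ∈ testSet K, φ f < rc φ K + ε := by
  obtain ⟨r, ⟨f, hf, rfl⟩, hr⟩ := exists_lt_of_csInf_lt (rc_image_nonempty φ K)
    (lt_add_of_pos_right (rc φ K) hε)
  exact ⟨f, hf, hr⟩

lemma rc_sup_le (K₁ K₂ : Set X) : rc φ (K₁ ∪ K₂) ≤ rc φ K₁ + rc φ K₂ := by
  refine le_of_forall_pos_le_add fun ε hε => ?_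
  obtain ⟨f₁, hf₁, hlt₁⟩ := rc_exists_lt φ hpos K₁ (half_pos hε)
  obtain ⟨f₂, hf₂, hlt₂⟩ := rc_exists_lt φ hpos K₂ (half_pos hε)
  have hmem : f₁ + f₂ ∈ testSet (K₁ ∪ K₂) := by
    refine ⟨fun x => add_nonneg (hf₁.1 x) (hf₂.1 x), ?_⟩
    rintro x (hx | hx)
    · exact le_add_of_le_of_nonneg (by simpa using hf₁.2 x hx) (hf₂.1 x) |>.trans_eq (by simp)
    · exact le_add_of_nonneg_of_le (hf₁.1 x) (by simpa using hf₂.2 x hx) |>.trans_eq (by simp)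
  have := rc_le φ hpos hmem
  rw [φ.map_add] at this
  linarith

lemma rc_sup_disjoint {K₁ K₂ : Set X} (hK₁ : IsCompact K₁) (hK₂ : IsCompact K₂)
    (hd : Disjoint K₁ K₂) : rc φ (K₁ ∪ K₂) = rc φ K₁ + rc φ K₂ := by
  refine le_antisymm (rc_sup_le φ hpos K₁ K₂) ?_
  refine le_of_forall_pos_le_add fun ε hε => ?_
  obtain ⟨f, hf, hlt⟩ := rc_exists_lt φ hpos (K₁ ∪ K₂) hε
  obtain ⟨u, hu0, hu1, hu01⟩ :=
    exists_continuous_zero_one_of_isClosed hK₁.isClosed hK₂.isClosed hd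
  have hf₁ : f * (1 - u) ∈ testSet K₁ := by
    constructor
    · intro x
      exact mul_nonneg (hf.1 x) (by simpa [sub_nonneg] using (hu01 x).2)
    · intro x hx
      have : u x = 0 := hu0 hx
      have h1 := hf.2 x (Or.inl hx)
      simp only [ContinuousMap.mul_apply, ContinuousMap.sub_apply, ContinuousMap.one_apply, this]
      linarith
  have hf₂ : f * u ∈ testSet K₂ := by
    constructor
    · intro x
      exact mul_nonneg (hf.1 x) ((hu01 x).1)
    · intro x hx
      have : u x = 1 := hu1 hx
      have h1 := hf.2 x (Or.inr hx)
      simp only [ContinuousMap.mul_apply, this, mul_one]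
      exact h1
  have hsum : f * (1 - u) + f * u = f := by
    ext x; simp; ring
  have h1 := rc_le φ hpos hf₁
  have h2 := rc_le φ hpos hf₂
  have h3 : φ (f * (1 - u)) + φ (f * u) = φ f := by
    rw [← φ.map_add, hsum]
  linarith

lemma rc_univ (hφ1 : φ 1 = 1) : rc φ (Set.univ : Set X) = 1 := by
  refine le_antisymm ?_ ?_
  · have := rc_le φ hpos (one_mem_testSet (Set.univ : Set X))
    rwa [hφ1] at this
  · refine le_csInf (rc_image_nonempty φ _) ?_
    rintro r ⟨f, hf, rfl⟩
    have : φ 1 ≤ φ f := φ_mono φ hpos fun x => by simpa using hf.2 x (Set.mem_univ x)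
    rwa [hφ1] at this

lemma rc_smul (l : G) (hl : ∀ f : C(X, ℝ), φ (smulCont l f) = φ f)
    (hl' : ∀ f : C(X, ℝ), φ (smulCont l⁻¹ f) = φ f) (K : Set X) :
    rc φ ((fun x => l • x) '' K) = rc φ K := by
  unfold rc
  congr 1
  ext r
  constructor
  · rintro ⟨f, ⟨hf0, hf1⟩, rfl⟩
    refine ⟨smulCont l⁻¹ f, ⟨?_, ?_⟩, hl' f⟩
    · intro x
      exact hf0 _
    · intro x hx
      have : (smulCont l⁻¹ f) x = f (l • x) := by simp [smulCont]
      rw [this]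
      exact hf1 _ ⟨x, hx, rfl⟩
  · rintro ⟨f, ⟨hf0, hf1⟩, rfl⟩
    refine ⟨smulCont l f, ⟨?_, ?_⟩, hl f⟩
    · intro x
      exact hf0 _
    · rintro x ⟨y, hy, rfl⟩
      have : (smulCont l f) (l • y) = f y := by simp [smulCont, inv_smul_smul]
      rw [this]
      exact hf1 y hy

/-- The Riesz content as a `Content`. -/
noncomputable def rieszCont : Content X where
  toFun K := (rc φ K).toNNReal
  mono' K₁ K₂ h := Real.toNNReal_mono (rc_mono φ hpos h)
  sup_disjoint' K₁ K₂ hd _ _ := by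
    have := rc_sup_disjoint φ hpos K₁.isCompact K₂.isCompact hd
    simp only [Compacts.coe_sup] at *
    rw [this, Real.toNNReal_add (rc_nonneg φ hpos _) (rc_nonneg φ hpos _)]
  sup_le' K₁ K₂ := by
    have h := rc_sup_le φ hpos (K₁ : Set X) K₂
    calc ((rc φ ((K₁ ⊔ K₂ : Compacts X) : Set X)).toNNReal)
        ≤ (rc φ (K₁ : Set X) + rc φ (K₂ : Set X)).toNNReal := Real.toNNReal_mono (by simpa using h)
      _ = _ := Real.toNNReal_add (rc_nonneg φ hpos _) (rc_nonneg φ hpos _)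

end PosLemmas

/-- Existence of an invariant measure from an invariant state. -/
theorem exists_inv_measure [MeasurableSpace X] [BorelSpace X] (Λ : Subgroup G)
    (hφ1 : φ 1 = 1)
    (hpos : ∀ f : C(X, ℝ), (∀ x, 0 ≤ f x) → 0 ≤ φ f)
    (hinv : ∀ l ∈ Λ, ∀ f : C(X, ℝ), φ (smulCont l f) = φ f) :
    ∃ ν : Measure X, IsProbabilityMeasure ν ∧ ν.Regular ∧
      ∀ l ∈ Λ, Measure.map (fun x => l • x) ν = ν := by
  let C : Content X := rieszCont φ hpos
  refine ⟨C.measure, ⟨?_⟩, C.regular, ?_⟩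
  · have h1 : C.measure Set.univ = C.outerMeasure Set.univ := C.measure_apply MeasurableSet.univ
    have h2 : C.outerMeasure Set.univ = C.innerContent ⟨Set.univ, isOpen_univ⟩ :=
      C.outerMeasure_of_isOpen _ isOpen_univ
    have h3 := C.innerContent_of_isCompact isCompact_univ isOpen_univ
    rw [h1, h2, h3]
    show ((rc φ (Set.univ : Set X)).toNNReal : ℝ≥0∞) = 1
    rw [rc_univ φ hpos hφ1]
    simp
  · intro l hl
    have hT : ∀ ⦃K : Compacts X⦄,
        (C.toFun (K.map (Homeomorph.smul l) (Homeomorph.smul l).continuous) : ℝ≥0∞)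
          = (C.toFun K : ℝ≥0∞) := by
      intro K
      have hrc : rc φ ((fun x => l • x) '' (K : Set X)) = rc φ (K : Set X) :=
        rc_smul φ hpos l (fun f => hinv l hl f) (fun f => hinv l⁻¹ (Λ.inv_mem hl) f) (K : Set X)
      show (((rc φ ((K.map (Homeomorph.smul l) (Homeomorph.smul l).continuous : Compacts X)
        : Set X)).toNNReal : ℝ≥0) : ℝ≥0∞) = _
      have hcoe : ((K.map (Homeomorph.smul l) (Homeomorph.smul l).continuous : Compacts X)
          : Set X) = (fun x => l • x) '' (K : Set X) := rfl
      rw [hcoe, hrc]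
      rfl
    refine Measure.ext fun s hs => ?_
    rw [Measure.map_apply (continuous_const_smul l).measurable hs,
      C.measure_apply (hs.preimage (continuous_const_smul l).measurable),
      C.measure_apply hs]
    exact C.outerMeasure_preimage (Homeomorph.smul l) hT s

end Aux

/-- Proposition 3.9: a subgroup `Λ ≤ Γ` fixes a regular Borel probability measure on a compact
Hausdorff Γ-space `X` iff there is a unital positive Γ-equivariant linear map
`C(X,ℝ) → ℓ∞(Γ/Λ)`. -/
theorem exists_invariant_probabilityMeasure_iff_exists_equivariant_map
    {G X : Type*} [Group G] [TopologicalSpace X] [CompactSpace X] [T2Space X] [Nonempty X]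
    [MeasurableSpace X] [BorelSpace X] [MulAction G X] [ContinuousConstSMul G X]
    (Λ : Subgroup G) :
    (∃ ν : Measure X, IsProbabilityMeasure ν ∧ ν.Regular ∧
        ∀ l ∈ Λ, Measure.map (fun x => l • x) ν = ν) ↔
      (∃ ψ : C(X, ℝ) →ₗ[ℝ] ((G ⧸ Λ) → ℝ),
        ψ 1 = 1 ∧
        (∀ f : C(X, ℝ), (∀ x, 0 ≤ f x) → ∀ q : G ⧸ Λ, 0 ≤ ψ f q) ∧
        (∀ f : C(X, ℝ), ∃ M : ℝ, ∀ q : G ⧸ Λ, |ψ f q| ≤ M) ∧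
        (∀ (g : G) (f : C(X, ℝ)) (q : G ⧸ Λ), ψ (smulCont g f) q = ψ f (g⁻¹ • q))) := by
  constructor
  · rintro ⟨ν, hprob, hreg, hinv⟩
    have integ : ∀ (f : C(X, ℝ)) (g : G), Integrable (fun x => f (g • x)) ν := fun f g =>
      (f.continuous.comp (continuous_const_smul g)).integrable_of_hasCompactSupport
        (IsCompact.of_isClosed_subset isCompact_univ (isClosed_tsupport _) (Set.subset_univ _))
    have key : ∀ (f : C(X, ℝ)) (a b : G), (QuotientGroup.leftRel Λ) a b →
        ∫ x, f (a • x) ∂ν = ∫ x, f (b • x) ∂ν := by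
      intro f a b hab
      rw [QuotientGroup.leftRel_apply] at hab
      have hb : b = a * (a⁻¹ * b) := by group
      calc ∫ x, f (a • x) ∂ν
          = ∫ x, f (a • x) ∂(Measure.map (fun x => (a⁻¹ * b) • x) ν) := by
            rw [hinv _ hab]
        _ = ∫ x, f (a • (a⁻¹ * b) • x) ∂ν :=
            integral_map (continuous_const_smul (a⁻¹ * b)).measurable.aemeasurable
              (Continuous.aestronglyMeasurable
                (f.continuous.comp (continuous_const_smul a)))
        _ = ∫ x, f (b • x) ∂ν := by
            congr 1
            funext x
            rw [← mul_smul, ← hb]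
    refine ⟨{
        toFun := fun f q => Quotient.liftOn' q (fun g => ∫ x, f (g • x) ∂ν) (key f)
        map_add' := ?_
        map_smul' := ?_ }, ?_, ?_, ?_, ?_⟩
    · intro f g
      funext q
      refine QuotientGroup.induction_on q fun a => ?_
      show (∫ x, (f + g) (a • x) ∂ν) = (∫ x, f (a • x) ∂ν) + ∫ x, g (a • x) ∂ν
      have h1 : ∀ x, (f + g) (a • x) = f (a • x) + g (a • x) := fun x => rfl
      simp only [h1]
      exact integral_add (integ f a) (integ g a)
    · intro c f
      funext q
      refine QuotientGroup.induction_on q fun a => ?_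
      show (∫ x, (c • f) (a • x) ∂ν) = c • ∫ x, f (a • x) ∂ν
      have h1 : ∀ x, (c • f) (a • x) = c • f (a • x) := fun x => rfl
      simp only [h1]
      exact integral_smul c _
    · funext q
      refine QuotientGroup.induction_on q fun a => ?_
      show (∫ x, (1 : C(X, ℝ)) (a • x) ∂ν) = 1
      have h1 : ∀ x : X, (1 : C(X, ℝ)) (a • x) = 1 := fun x => rfl
      simp only [h1]
      simp [hprob.measure_univ]
    · intro f hf q
      refine QuotientGroup.induction_on q fun a => ?_
      show 0 ≤ ∫ x, f (a • x) ∂ν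
      exact integral_nonneg fun x => hf _
    · intro f
      refine ⟨‖f‖, fun q => ?_⟩
      refine QuotientGroup.induction_on q fun a => ?_
      show |∫ x, f (a • x) ∂ν| ≤ ‖f‖
      have := norm_integral_le_of_norm_le_const (μ := ν) (f := fun x => f (a • x)) (C := ‖f‖)
        (Filter.Eventually.of_forall fun x => f.norm_coe_le_norm (a • x))
      rwa [probReal_univ, mul_one, Real.norm_eq_abs] at this
    · intro g f q
      refine QuotientGroup.induction_on q fun k => ?_
      have hq : g⁻¹ • (QuotientGroup.mk k : G ⧸ Λ) = QuotientGroup.mk (g⁻¹ * k) := rfl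
      rw [hq]
      show (∫ x, (smulCont g f) (k • x) ∂ν) = ∫ x, f ((g⁻¹ * k) • x) ∂ν
      congr 1
      funext x
      show f (g⁻¹ • k • x) = f ((g⁻¹ * k) • x)
      rw [mul_smul]
  · rintro ⟨ψ, hunit, hposψ, _, hequi⟩
    refine exists_inv_measure ((LinearMap.proj ((1 : G) : G ⧸ Λ)).comp ψ) Λ ?_ ?_ ?_
    · show (ψ 1) ((1 : G) : G ⧸ Λ) = 1
      rw [hunit]
      rfl
    · intro f hf
      exact hposψ f hf _
    · intro l hl f
      show (ψ (smulCont l f)) ((1 : G) : G ⧸ Λ) = (ψ f) ((1 : G) : G ⧸ Λ)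
      rw [hequi l f ((1 : G) : G ⧸ Λ)]
      have hq : l⁻¹ • ((1 : G) : G ⧸ Λ) = ((1 : G) : G ⧸ Λ) := by
        have h1 : l⁻¹ • ((1 : G) : G ⧸ Λ) = ((l⁻¹ * 1 : G) : G ⧸ Λ) := rfl
        rw [h1, mul_one, QuotientGroup.eq]
        simpa using hl
      rw [hq]
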